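/- Let C_n be a cycle of odd length n > 3 with edge ideal I. Then the minimal generators of I^{[(n-1)/2 - 1]} are exactly the monomials (x_1...x_n)/(x_r x_s x_t) with r < s < t and both s - r and t - s odd. Equivalently, {r,s,t} is the complement of the vertex set of a matching of size (n-3)/2 in C_n iff s - r and t - s are odd. -/

import Mathlib

open MvPolynomial

noncomputable section

abbrev SRing (K : Type) [Field K] (n : ℕ) := MvPolynomial (Fin n) K

/-- total degree of an exponent vector -/
def mdeg {n : ℕ} (e : Fin n →₀ ℕ) : ℕ := e.sum fun _ v => v

/-- minimal monomial generators of a monomial ideal, as exponent vectors: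
monomials in `J` none of whose proper divisors lies in `J` -/
def minGen {K : Type} [Field K] {n : ℕ} (J : Ideal (SRing K n)) : Set (Fin n →₀ ℕ) :=
  {e | (monomial e (1:K)) ∈ J ∧
    ∀ e' : Fin n →₀ ℕ, e' ≤ e → e' ≠ e → (monomial e' (1:K)) ∉ J}

/-- adjacency in the graph `G_J^{(u,v)}` : vertices are the minimal generators of `J`
dividing `lcm(u,v)`, with an edge between two of them iff their lcm has degree `d+1` -/
def lcmGraphAdj {K : Type} [Field K] {n : ℕ} (J : Ideal (SRing K n)) (d : ℕ)
    (u v : Fin n →₀ ℕ) (w w' : Fin n →₀ ℕ) : Prop :=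
  w ∈ minGen J ∧ w' ∈ minGen J ∧ w ≤ u ⊔ v ∧ w' ≤ u ⊔ v ∧ mdeg (w ⊔ w') = d + 1

/-- a graded partial free resolution of the ideal `I`, exact at homological positions `< r`:
`F_i` is free with basis in (internal) degrees `dg i`, the maps are graded of degree `0`,
`F_0` surjects onto `I`, and the sequence is exact at `F_i` for `i < r`. -/
structure GradedPartialRes {K : Type} [Field K] {n : ℕ} (I : Ideal (SRing K n)) (r : ℕ∞) where
  s : ℕ → ℕ
  dg : ∀ i, Fin (s i) → ℕ
  aug : (Fin (s 0) →₀ SRing K n) →ₗ[SRing K n] SRing K n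
  diff : ∀ i, (Fin (s (i+1)) →₀ SRing K n) →ₗ[SRing K n] (Fin (s i) →₀ SRing K n)
  aug_hom : ∀ k, (aug (Finsupp.single k 1)).IsHomogeneous (dg 0 k)
  diff_hom : ∀ i k l, (diff i (Finsupp.single k 1)) l = 0 ∨
      ∃ m, ((diff i (Finsupp.single k 1)) l).IsHomogeneous m ∧ dg i l + m = dg (i+1) k
  aug_range : LinearMap.range aug = I
  exact_zero : (0 : ℕ∞) < r → LinearMap.range (diff 0) = LinearMap.ker aug
  exact_succ : ∀ i : ℕ, ((i : ℕ∞) + 1) < r →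
      LinearMap.range (diff (i+1)) = LinearMap.ker (diff i)

/-- the graded Betti number `β_{i,j}(I)`: the minimal number of degree-`j` basis elements
in homological position `i`, over all graded partial resolutions of `I` exact at
positions `0, …, i` (the minimum is attained by the minimal graded free resolution). -/
def gradedBetti {K : Type} [Field K] {n : ℕ} (I : Ideal (SRing K n)) (i j : ℕ) : ℕ∞ :=
  ⨅ R : GradedPartialRes I ((i : ℕ∞)+1),
    ((Finset.univ.filter fun k => R.dg i k = j).card : ℕ∞)

/-- `I` (generated in degree `d`) is `r` steps linear: `β_{i,i+j}(I) = 0` for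
all `i ≤ r` and `j > d` -/
def stepsLinear {K : Type} [Field K] {n : ℕ} (I : Ideal (SRing K n)) (d r : ℕ) : Prop :=
  ∀ i ≤ r, ∀ j, d < j → gradedBetti I i (i+j) = 0

/-- `index(I) = sup{r : I is r steps linear} + 1` -/
def idealIndex {K : Type} [Field K] {n : ℕ} (I : Ideal (SRing K n)) (d : ℕ) : ℕ∞ :=
  sSup {x : ℕ∞ | ∃ r : ℕ, x = (r : ℕ∞) + 1 ∧ stepsLinear I d r}

/-- `I` is linearly related: all first syzygies are linear, i.e. `index(I) > 1` -/
def LinearlyRelated {K : Type} [Field K] {n : ℕ} (I : Ideal (SRing K n)) (d : ℕ) : Prop :=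
  stepsLinear I d 1

/-- projective dimension of `I`: the minimal length of a graded free resolution of `I` -/
def projDim {K : Type} [Field K] {n : ℕ} (I : Ideal (SRing K n)) : ℕ∞ :=
  sInf {x : ℕ∞ | ∃ m : ℕ, x = (m : ℕ∞) ∧
    ∃ R : GradedPartialRes I ⊤, ∀ i : ℕ, m < i → R.s i = 0}

/-- the edge ideal of the graph (possibly with loops) given by a symmetric relation `E`:
generated by the monomials `X i * X j` with `E i j` -/
def edgeIdeal (K : Type) [Field K] {n : ℕ} (E : Fin n → Fin n → Prop) : Ideal (SRing K n) :=
  Ideal.span {p | ∃ i j, E i j ∧ p = X i * X j}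

/-- `E` is gap free: for any two disjoint edges there is an edge meeting both -/
def GapFree {n : ℕ} (E : Fin n → Fin n → Prop) : Prop :=
  ∀ i i' j j', E i i' → E j j' → i ≠ j → i ≠ j' → i' ≠ j → i' ≠ j' →
    ∃ a b, E a b ∧ (a = i ∨ a = i') ∧ (b = j ∨ b = j')

/-- a matching of a simple graph, recorded as a finite set of ordered pairs `(i,j)` with
`i < j`: edges of `G` that are pairwise disjoint -/
def IsMatching {n : ℕ} (G : SimpleGraph (Fin n)) (M : Finset (Fin n × Fin n)) : Prop :=
  (∀ p ∈ M, G.Adj p.1 p.2 ∧ p.1 < p.2) ∧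
  ∀ p ∈ M, ∀ q ∈ M, p ≠ q →
    p.1 ≠ q.1 ∧ p.1 ≠ q.2 ∧ p.2 ≠ q.1 ∧ p.2 ≠ q.2

/-- the matching number `ν(G)` -/
def matchNum {n : ℕ} (G : SimpleGraph (Fin n)) : ℕ :=
  sSup {k | ∃ M, IsMatching G M ∧ M.card = k}

/-- the edge `e` meets the edge `f` (as unordered pairs of vertices) -/
def meets {n : ℕ} (e f : Fin n × Fin n) : Prop :=
  e.1 = f.1 ∨ e.1 = f.2 ∨ e.2 = f.1 ∨ e.2 = f.2

/-- two (disjoint) edges form a gap in `G`: no edge of `G` meets both -/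
def FormsGap {n : ℕ} (G : SimpleGraph (Fin n)) (e e' : Fin n × Fin n) : Prop :=
  ¬ ∃ a b, G.Adj a b ∧ meets (a, b) e ∧ meets (a, b) e'

/-- a restricted matching: a matching one of whose edges forms a gap with
every other edge of the matching -/
def IsRestrictedMatching {n : ℕ} (G : SimpleGraph (Fin n)) (M : Finset (Fin n × Fin n)) : Prop :=
  IsMatching G M ∧ ∃ e ∈ M, ∀ e' ∈ M, e' ≠ e → FormsGap G e e'

/-- `ν₀(G)`: maximal size of a restricted matching, set to `1` if there is none -/
def resMatchNum {n : ℕ} (G : SimpleGraph (Fin n)) : ℕ :=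
  max (sSup {k | ∃ M, IsRestrictedMatching G M ∧ M.card = k}) 1

/-- the `k`-th squarefree power `I(G)^{[k]}`: generated by the products of the
edges of the matchings of `G` of size `k` -/
def sqfreePower (K : Type) [Field K] {n : ℕ} (G : SimpleGraph (Fin n)) (k : ℕ) :
    Ideal (SRing K n) :=
  Ideal.span {p | ∃ M : Finset (Fin n × Fin n), IsMatching G M ∧ M.card = k ∧
    p = ∏ q ∈ M, (X q.1 * X q.2)}

/-- a monomial ideal has linear quotients: for some ordering `u_1, …, u_t` of its minimal
monomial generators, each colon ideal `(u_1, …, u_{i-1}) : u_i` is generated by variables -/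
def HasLinearQuotients {K : Type} [Field K] {n : ℕ} (J : Ideal (SRing K n)) : Prop :=
  ∃ (t : ℕ) (u : Fin t → (Fin n →₀ ℕ)), Function.Injective u ∧
    (∀ e, e ∈ minGen J ↔ ∃ i, u i = e) ∧
    ∀ i : Fin t, ∃ V : Set (Fin n),
      Submodule.colon (Ideal.span ((fun j => (monomial (u j) (1:K))) '' {j | j < i}))
        (Ideal.span {monomial (u i) (1:K)}) =
      Ideal.span ((fun v => (X v : SRing K n)) '' V)

/-- the cycle graph of length `n` on `Fin n`: edges `{i, i+1}` and `{0, n-1}` -/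
def cycleG (n : ℕ) : SimpleGraph (Fin n) where
  Adj i j := i ≠ j ∧ ((i:ℕ)+1 = j ∨ (j:ℕ)+1 = i ∨ ((i:ℕ) = 0 ∧ (j:ℕ) = n-1) ∨
    ((j:ℕ) = 0 ∧ (i:ℕ) = n-1))
  symm := by
    constructor
    intro i j h
    exact ⟨h.1.symm, by tauto⟩
  loopless := by constructor; intro i h; exact h.1 rfl

namespace Stmt17Aux

variable {K : Type} [Field K] {n : ℕ}

def expo {n : ℕ} (M : Finset (Fin n × Fin n)) : Fin n →₀ ℕ :=
  ∑ q ∈ M, (Finsupp.single q.1 1 + Finsupp.single q.2 1)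

def covered {n : ℕ} (M : Finset (Fin n × Fin n)) : Finset (Fin n) :=
  M.biUnion fun q => {q.1, q.2}

lemma prodX (M : Finset (Fin n × Fin n)) :
    (∏ q ∈ M, (X q.1 * X q.2 : SRing K n)) = monomial (expo M) 1 := by
  rw [expo, monomial_sum_one]
  refine Finset.prod_congr rfl fun q _ => ?_
  rw [X, X, monomial_mul, one_mul]

lemma mem_sqfree {G : SimpleGraph (Fin n)} {k : ℕ} {e : Fin n →₀ ℕ} :
    (monomial e (1:K)) ∈ sqfreePower K G k ↔
      ∃ M, IsMatching G M ∧ M.card = k ∧ expo M ≤ e := by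
  have hset : {p : SRing K n | ∃ M : Finset (Fin n × Fin n), IsMatching G M ∧ M.card = k ∧
      p = ∏ q ∈ M, (X q.1 * X q.2)} =
      (fun s => monomial s (1:K)) '' {s | ∃ M, IsMatching G M ∧ M.card = k ∧ s = expo M} := by
    ext p
    constructor
    · rintro ⟨M, h1, h2, rfl⟩
      exact ⟨expo M, ⟨M, h1, h2, rfl⟩, (prodX M).symm⟩
    · rintro ⟨s, ⟨M, h1, h2, rfl⟩, rfl⟩
      exact ⟨M, h1, h2, (prodX M).symm⟩
  rw [sqfreePower, hset, mem_ideal_span_monomial_image]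
  have hsup : (monomial e (1:K)).support = {e} := by
    classical
    rw [support_monomial, if_neg (one_ne_zero (α := K))]
  rw [hsup]
  constructor
  · intro h
    obtain ⟨si, ⟨M, h1, h2, rfl⟩, hle⟩ := h e (Finset.mem_singleton_self e)
    exact ⟨M, h1, h2, hle⟩
  · rintro ⟨M, h1, h2, hle⟩ xi hxi
    rw [Finset.mem_singleton] at hxi
    subst hxi
    exact ⟨expo M, ⟨M, h1, h2, rfl⟩, hle⟩

lemma expo_apply {G : SimpleGraph (Fin n)} {M : Finset (Fin n × Fin n)}
    (hM : IsMatching G M) (x : Fin n) :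
    expo M x = if x ∈ covered M then 1 else 0 := by
  classical
  rw [expo, Finsupp.finset_sum_apply]
  have hterm : ∀ q : Fin n × Fin n,
      ((Finsupp.single q.1 1 + Finsupp.single q.2 1 : Fin n →₀ ℕ)) x
        = ((if q.1 = x then 1 else 0) + (if q.2 = x then 1 else 0) : ℕ) := by
    intro q
    rw [Finsupp.add_apply, Finsupp.single_apply, Finsupp.single_apply]
  by_cases hx : x ∈ covered M
  · rw [if_pos hx]
    obtain ⟨q0, hq0M, hq0⟩ := Finset.mem_biUnion.mp hx
    simp only [Finset.mem_insert, Finset.mem_singleton] at hq0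
    have hne := ne_of_lt (hM.1 q0 hq0M).2
    rw [Finset.sum_eq_single q0]
    · rw [hterm]
      rcases hq0 with rfl | rfl
      · rw [if_pos rfl, if_neg (Ne.symm hne)]
      · rw [if_neg hne, if_pos rfl]
    · intro b hb hbq0
      obtain ⟨d1, d2, d3, d4⟩ := hM.2 b hb q0 hq0M hbq0
      rw [hterm]
      rcases hq0 with rfl | rfl
      · rw [if_neg d1, if_neg d3]; rfl
      · rw [if_neg d2, if_neg d4]; rfl
    · intro hc; exact absurd hq0M hc
  · rw [if_neg hx]
    refine Finset.sum_eq_zero fun q hq => ?_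
    rw [hterm]
    have h1 : q.1 ≠ x := fun hc => hx (Finset.mem_biUnion.mpr ⟨q, hq, by simp [hc]⟩)
    have h2 : q.2 ≠ x := fun hc => hx (Finset.mem_biUnion.mpr ⟨q, hq, by simp [hc]⟩)
    rw [if_neg h1, if_neg h2]; rfl

lemma isMatching_subset {G : SimpleGraph (Fin n)} {M M' : Finset (Fin n × Fin n)}
    (hM : IsMatching G M) (h : M' ⊆ M) : IsMatching G M' :=
  ⟨fun p hp => hM.1 p (h hp), fun p hp q hq => hM.2 p (h hp) q (h hq)⟩

lemma card_covered {G : SimpleGraph (Fin n)} {M : Finset (Fin n × Fin n)}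
    (hM : IsMatching G M) : (covered M).card = 2 * M.card := by
  classical
  rw [covered, Finset.card_biUnion]
  · rw [Finset.sum_congr rfl
      (fun q hq => Finset.card_pair (ne_of_lt (hM.1 q hq).2)), Finset.sum_const,
      smul_eq_mul, mul_comm]
  · intro p hp q hq hpq
    obtain ⟨d1, d2, d3, d4⟩ := hM.2 p hp q hq hpq
    refine Finset.disjoint_left.mpr ?_
    intro a ha hb
    simp only [Finset.mem_insert, Finset.mem_singleton] at ha hb
    rcases ha with rfl | rfl <;> rcases hb with h | h
    exacts [d1 h, d2 h, d3 h, d4 h]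

lemma mdeg_eq_sum (e : Fin n →₀ ℕ) : mdeg e = ∑ x : Fin n, e x :=
  Finsupp.sum_fintype _ _ (fun _ => rfl)

lemma mdeg_mono {e e' : Fin n →₀ ℕ} (h : e' ≤ e) : mdeg e' ≤ mdeg e := by
  rw [mdeg_eq_sum, mdeg_eq_sum]
  exact Finset.sum_le_sum fun x _ => h x

lemma mdeg_strict {e e' : Fin n →₀ ℕ} (h : e' ≤ e) (hne : e' ≠ e) : mdeg e' < mdeg e := by
  rw [mdeg_eq_sum, mdeg_eq_sum]
  obtain ⟨x, hx⟩ : ∃ x, e' x ≠ e x := by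
    by_contra hc
    push_neg at hc
    exact hne (Finsupp.ext hc)
  exact Finset.sum_lt_sum (fun i _ => h i) ⟨x, Finset.mem_univ x, lt_of_le_of_ne (h x) hx⟩

lemma mdeg_expo {G : SimpleGraph (Fin n)} {M : Finset (Fin n × Fin n)}
    (hM : IsMatching G M) : mdeg (expo M) = 2 * M.card := by
  classical
  rw [mdeg_eq_sum]
  calc ∑ x : Fin n, expo M x = ∑ x ∈ covered M, 1 := by
        rw [Finset.sum_congr rfl (fun x _ => expo_apply hM x), Finset.sum_ite_mem,
          Finset.univ_inter]
    _ = 2 * M.card := by rw [Finset.sum_const, smul_eq_mul, mul_one, card_covered hM]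

lemma gen_mem {G : SimpleGraph (Fin n)} {M : Finset (Fin n × Fin n)} {k : ℕ}
    (h1 : IsMatching G M) (h2 : M.card = k) :
    (monomial (expo M) (1:K)) ∈ sqfreePower K G k := by
  rw [← prodX]
  exact Ideal.subset_span ⟨M, h1, h2, rfl⟩

lemma exists_sorted_triple {T : Finset (Fin n)} (h : T.card = 3) :
    ∃ r s t : Fin n, r < s ∧ s < t ∧ T = {r, s, t} := by
  obtain ⟨a, b, c, hab, hac, hbc, rfl⟩ := Finset.card_eq_three.mp h
  rcases lt_trichotomy a b with h1 | h1 | h1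
  · rcases lt_trichotomy b c with h2 | h2 | h2
    · exact ⟨a, b, c, h1, h2, rfl⟩
    · exact absurd h2 hbc
    · rcases lt_trichotomy a c with h3 | h3 | h3
      · exact ⟨a, c, b, h3, h2, by ext w; simp; tauto⟩
      · exact absurd h3 hac
      · exact ⟨c, a, b, h3, h1, by ext w; simp; tauto⟩
  · exact absurd h1 hab
  · rcases lt_trichotomy a c with h2 | h2 | h2
    · exact ⟨b, a, c, h1, h2, by ext w; simp; tauto⟩
    · exact absurd h2 hac
    · rcases lt_trichotomy b c with h3 | h3 | h3
      · exact ⟨b, c, a, h3, h2, by ext w; simp; tauto⟩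
      · exact absurd h3 hbc
      · exact ⟨c, b, a, h3, h1, by ext w; simp; tauto⟩

lemma arc_even {n : ℕ} {M : Finset (Fin n × Fin n)} (hM : IsMatching (cycleG n) M)
    {a b : Fin n} (hab : a < b) (ha : a ∉ covered M) (hb : b ∉ covered M)
    (hmid : ∀ v : Fin n, a < v → v < b → v ∈ covered M) :
    Even ((b:ℕ) - (a:ℕ) - 1) := by
  classical
  set M' := M.filter (fun q => q.1 ∈ Finset.Ioo a b ∧ q.2 ∈ Finset.Ioo a b) with hM'
  have key : Finset.Ioo a b = covered M' := by
    ext v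
    constructor
    · intro hv
      have hv1 : a < v := (Finset.mem_Ioo.mp hv).1
      have hv2 : v < b := (Finset.mem_Ioo.mp hv).2
      obtain ⟨q, hqM, hq⟩ := Finset.mem_biUnion.mp (hmid v hv1 hv2)
      simp only [Finset.mem_insert, Finset.mem_singleton] at hq
      have hadj := (hM.1 q hqM).1
      have hlt : (q.1 : ℕ) < (q.2 : ℕ) := (hM.1 q hqM).2
      have hc1 : q.1 ∈ covered M := Finset.mem_biUnion.mpr ⟨q, hqM, by simp⟩
      have hc2 : q.2 ∈ covered M := Finset.mem_biUnion.mpr ⟨q, hqM, by simp⟩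
      obtain ⟨hne, hcase⟩ := hadj
      have hvala : (a:ℕ) < n := a.isLt
      have hvalb : (b:ℕ) < n := b.isLt
      rcases hq with rfl | rfl
      · -- v = q.1
        have hv1' : (a:ℕ) < (q.1:ℕ) := hv1
        have hv2' : (q.1:ℕ) < (b:ℕ) := hv2
        have h2v : (q.2:ℕ) = (q.1:ℕ) + 1 := by
          rcases hcase with h | h | h | h <;> omega
        have hne2b : (q.2:ℕ) ≠ (b:ℕ) := fun h => hb (Fin.ext h ▸ hc2)
        have hq2b : q.2 < b := by
          show (q.2:ℕ) < (b:ℕ); omega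
        have hq2a : a < q.2 := lt_trans hv1 (show q.1 < q.2 from hlt)
        refine Finset.mem_biUnion.mpr ⟨q, Finset.mem_filter.mpr ⟨hqM, ?_, ?_⟩, by simp⟩
        · exact Finset.mem_Ioo.mpr ⟨hv1, hv2⟩
        · exact Finset.mem_Ioo.mpr ⟨hq2a, hq2b⟩
      · -- v = q.2
        have hv1' : (a:ℕ) < (q.2:ℕ) := hv1
        have hv2' : (q.2:ℕ) < (b:ℕ) := hv2
        have h2v : (q.1:ℕ) + 1 = (q.2:ℕ) := by
          rcases hcase with h | h | h | h <;> omega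
        have hne1a : (q.1:ℕ) ≠ (a:ℕ) := fun h => ha (Fin.ext h ▸ hc1)
        have hq1a : a < q.1 := by
          show (a:ℕ) < (q.1:ℕ); omega
        have hq1b : q.1 < b := lt_trans (show q.1 < q.2 from hlt) hv2
        refine Finset.mem_biUnion.mpr ⟨q, Finset.mem_filter.mpr ⟨hqM, ?_, ?_⟩, by simp⟩
        · exact Finset.mem_Ioo.mpr ⟨hq1a, hq1b⟩
        · exact Finset.mem_Ioo.mpr ⟨hv1, hv2⟩
    · intro hv
      obtain ⟨q, hq, hvq⟩ := Finset.mem_biUnion.mp hv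
      obtain ⟨_, hq1, hq2⟩ := Finset.mem_filter.mp hq
      simp only [Finset.mem_insert, Finset.mem_singleton] at hvq
      rcases hvq with rfl | rfl
      exacts [hq1, hq2]
  have hsub : M' ⊆ M := Finset.filter_subset _ _
  have hcc := card_covered (isMatching_subset hM hsub)
  rw [← key, Fin.card_Ioo] at hcc
  exact ⟨M'.card, by omega⟩

def fv (n : ℕ) (hn : 0 < n) (i : ℕ) : Fin n := if h : i < n then ⟨i, h⟩ else ⟨0, hn⟩

lemma fv_val {n : ℕ} (hn : 0 < n) {i : ℕ} (h : i < n) : ((fv n hn i) : ℕ) = i := by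
  rw [fv, dif_pos h]

def edgeF (n : ℕ) (hn : 0 < n) (i : ℕ) : Fin n × Fin n :=
  if i + 1 < n then (fv n hn i, fv n hn (i+1)) else (fv n hn 0, fv n hn (n-1))

lemma edgeF_spec {n : ℕ} (hn : 0 < n) {i : ℕ} (hi : i < n) :
    (((edgeF n hn i).1 : ℕ) = (if i + 1 < n then i else 0)) ∧
    (((edgeF n hn i).2 : ℕ) = (if i + 1 < n then i + 1 else n - 1)) := by
  rw [edgeF]
  split_ifs with h
  · exact ⟨fv_val hn hi, fv_val hn h⟩
  · exact ⟨fv_val hn hn, fv_val hn (by omega)⟩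

lemma matchS {n : ℕ} (hn : 3 < n) (hn0 : 0 < n) (S : Finset ℕ) (hSn : ∀ i ∈ S, i < n)
    (gap : ∀ i ∈ S, ∀ j ∈ S, i ≠ j →
      i + 1 ≠ j ∧ j + 1 ≠ i ∧ ¬(i = n-1 ∧ j = 0) ∧ ¬(j = n-1 ∧ i = 0)) :
    IsMatching (cycleG n) (S.image (edgeF n hn0)) ∧
    (S.image (edgeF n hn0)).card = S.card ∧
    ∀ v : Fin n, v ∈ covered (S.image (edgeF n hn0)) ↔
      ∃ i ∈ S, (v:ℕ) = i ∨ (v:ℕ) = i + 1 ∨ (i = n - 1 ∧ (v:ℕ) = 0) := by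
  classical
  refine ⟨⟨?_, ?_⟩, ?_, ?_⟩
  · -- edges are edges, sorted
    intro p hp
    obtain ⟨i, hiS, rfl⟩ := Finset.mem_image.mp hp
    have hi := hSn i hiS
    obtain ⟨e1, e2⟩ := edgeF_spec hn0 hi
    constructor
    · refine ⟨Fin.ne_of_val_ne ?_, ?_⟩
      · rw [e1, e2]; split_ifs <;> omega
      · by_cases h : i + 1 < n
        · left; rw [e1, e2, if_pos h, if_pos h]
        · right; right; left
          rw [e1, e2, if_neg h, if_neg h]; exact ⟨rfl, rfl⟩
    · show ((edgeF n hn0 i).1 : ℕ) < ((edgeF n hn0 i).2 : ℕ)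
      rw [e1, e2]; split_ifs <;> omega
  · -- distinctness
    intro p hp q hq hpq
    obtain ⟨i, hiS, rfl⟩ := Finset.mem_image.mp hp
    obtain ⟨j, hjS, rfl⟩ := Finset.mem_image.mp hq
    have hij : i ≠ j := fun h => hpq (by rw [h])
    obtain ⟨g1, g2, g3, g4⟩ := gap i hiS j hjS hij
    have hi := hSn i hiS
    have hj := hSn j hjS
    obtain ⟨e1, e2⟩ := edgeF_spec hn0 hi
    obtain ⟨f1, f2⟩ := edgeF_spec hn0 hj
    refine ⟨Fin.ne_of_val_ne ?_, Fin.ne_of_val_ne ?_, Fin.ne_of_val_ne ?_,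
      Fin.ne_of_val_ne ?_⟩ <;>
      (simp only [e1, e2, f1, f2]; split_ifs <;> omega)
  · -- card
    rw [Finset.card_image_of_injOn]
    intro i hiS j hjS hij
    have hi := hSn i hiS
    have hj := hSn j hjS
    obtain ⟨e1, e2⟩ := edgeF_spec hn0 hi
    obtain ⟨f1, f2⟩ := edgeF_spec hn0 hj
    have v1 : ((edgeF n hn0 i).1 : ℕ) = ((edgeF n hn0 j).1 : ℕ) := by rw [hij]
    have v2 : ((edgeF n hn0 i).2 : ℕ) = ((edgeF n hn0 j).2 : ℕ) := by rw [hij]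
    rw [e1, f1] at v1
    rw [e2, f2] at v2
    revert v1 v2
    split_ifs <;> omega
  · -- coverage
    intro v
    have hv : (v:ℕ) < n := v.isLt
    constructor
    · intro hvc
      obtain ⟨p, hp, hvp⟩ := Finset.mem_biUnion.mp hvc
      obtain ⟨i, hiS, rfl⟩ := Finset.mem_image.mp hp
      have hi := hSn i hiS
      obtain ⟨e1, e2⟩ := edgeF_spec hn0 hi
      simp only [Finset.mem_insert, Finset.mem_singleton] at hvp
      refine ⟨i, hiS, ?_⟩
      rcases hvp with rfl | rfl
      · rw [e1]; split_ifs <;> omega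
      · rw [e2]; split_ifs <;> omega
    · rintro ⟨i, hiS, hcase⟩
      have hi := hSn i hiS
      obtain ⟨e1, e2⟩ := edgeF_spec hn0 hi
      refine Finset.mem_biUnion.mpr ⟨edgeF n hn0 i,
        Finset.mem_image.mpr ⟨i, hiS, rfl⟩, ?_⟩
      simp only [Finset.mem_insert, Finset.mem_singleton]
      rw [← Fin.val_inj (b := (edgeF n hn0 i).1), ← Fin.val_inj (b := (edgeF n hn0 i).2)]
      rw [e1, e2]
      split_ifs <;> omega

lemma construct {n : ℕ} (hn : 3 < n) (hodd : Odd n) (r s t : Fin n)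
    (hrs : r < s) (hst : s < t) (h1 : Odd ((s:ℕ) - (r:ℕ))) (h2 : Odd ((t:ℕ) - (s:ℕ))) :
    ∃ M : Finset (Fin n × Fin n), IsMatching (cycleG n) M ∧ M.card = (n-1)/2 - 1 ∧
      ∀ v : Fin n, v ∈ covered M ↔ ¬(v = r ∨ v = s ∨ v = t) := by
  classical
  have hn0 : 0 < n := by omega
  have hrs' : (r:ℕ) < (s:ℕ) := hrs
  have hst' : (s:ℕ) < (t:ℕ) := hst
  have hT : (t:ℕ) < n := t.isLt
  have hn2 : n % 2 = 1 := Nat.odd_iff.mp hodd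
  have p1 : ((s:ℕ) - (r:ℕ)) % 2 = 1 := Nat.odd_iff.mp h1
  have p2 : ((t:ℕ) - (s:ℕ)) % 2 = 1 := Nat.odd_iff.mp h2
  set v0 : ℕ := (n + 1 - (t:ℕ)) % 2 with hv0
  set m1 : ℕ := ((s:ℕ) - (r:ℕ) - 1)/2 with hm1
  set m2 : ℕ := ((t:ℕ) - (s:ℕ) - 1)/2 with hm2
  set m3 : ℕ := (n - (t:ℕ))/2 with hm3
  set m4 : ℕ := ((r:ℕ) - v0 + 1)/2 with hm4
  set S1 : Finset ℕ := (Finset.range m1).image (fun j => (r:ℕ) + 1 + 2*j) with hS1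
  set S2 : Finset ℕ := (Finset.range m2).image (fun j => (s:ℕ) + 1 + 2*j) with hS2
  set S3 : Finset ℕ := (Finset.range m3).image (fun j => (t:ℕ) + 1 + 2*j) with hS3
  set S4 : Finset ℕ := (Finset.range m4).image (fun j => v0 + 2*j) with hS4
  set S : Finset ℕ := S1 ∪ S2 ∪ S3 ∪ S4 with hSdef
  have hmem : ∀ i, i ∈ S ↔
      ((∃ j, j < m1 ∧ i = (r:ℕ) + 1 + 2*j) ∨
       (∃ j, j < m2 ∧ i = (s:ℕ) + 1 + 2*j) ∨
       (∃ j, j < m3 ∧ i = (t:ℕ) + 1 + 2*j) ∨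
       (∃ j, j < m4 ∧ i = v0 + 2*j)) := by
    intro i
    simp only [hSdef, hS1, hS2, hS3, hS4, Finset.mem_union, Finset.mem_image,
      Finset.mem_range]
    constructor
    · rintro (((⟨j, hj, hji⟩ | ⟨j, hj, hji⟩) | ⟨j, hj, hji⟩) | ⟨j, hj, hji⟩)
      exacts [Or.inl ⟨j, hj, hji.symm⟩, Or.inr (Or.inl ⟨j, hj, hji.symm⟩),
        Or.inr (Or.inr (Or.inl ⟨j, hj, hji.symm⟩)),
        Or.inr (Or.inr (Or.inr ⟨j, hj, hji.symm⟩))]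
    · rintro (⟨j, hj, hji⟩ | ⟨j, hj, hji⟩ | ⟨j, hj, hji⟩ | ⟨j, hj, hji⟩)
      exacts [Or.inl (Or.inl (Or.inl ⟨j, hj, hji.symm⟩)),
        Or.inl (Or.inl (Or.inr ⟨j, hj, hji.symm⟩)),
        Or.inl (Or.inr ⟨j, hj, hji.symm⟩), Or.inr ⟨j, hj, hji.symm⟩]
  have hSn : ∀ i ∈ S, i < n := by
    intro i hi
    rw [hmem] at hi
    rcases hi with ⟨j, hj, rfl⟩ | ⟨j, hj, rfl⟩ | ⟨j, hj, rfl⟩ | ⟨j, hj, rfl⟩ <;> omega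
  have gap : ∀ i ∈ S, ∀ j ∈ S, i ≠ j →
      i + 1 ≠ j ∧ j + 1 ≠ i ∧ ¬(i = n-1 ∧ j = 0) ∧ ¬(j = n-1 ∧ i = 0) := by
    intro i hi j hj hij
    rw [hmem] at hi hj
    rcases hi with ⟨a, ha, rfl⟩ | ⟨a, ha, rfl⟩ | ⟨a, ha, rfl⟩ | ⟨a, ha, rfl⟩ <;>
      rcases hj with ⟨b, hb, rfl⟩ | ⟨b, hb, rfl⟩ | ⟨b, hb, rfl⟩ | ⟨b, hb, rfl⟩ <;>
      omega
  obtain ⟨hmatch, hcard, hcov⟩ := matchS hn hn0 S hSn gap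
  refine ⟨S.image (edgeF n hn0), hmatch, ?_, ?_⟩
  · -- cardinality
    rw [hcard, hSdef]
    have inj1 : Set.InjOn (fun j => (r:ℕ) + 1 + 2*j) (Finset.range m1) :=
      fun a _ b _ h => by simp only [] at h; omega
    have inj2 : Set.InjOn (fun j => (s:ℕ) + 1 + 2*j) (Finset.range m2) :=
      fun a _ b _ h => by simp only [] at h; omega
    have inj3 : Set.InjOn (fun j => (t:ℕ) + 1 + 2*j) (Finset.range m3) :=
      fun a _ b _ h => by simp only [] at h; omega
    have inj4 : Set.InjOn (fun j => v0 + 2*j) (Finset.range m4) :=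
      fun a _ b _ h => by simp only [] at h; omega
    have d1 : Disjoint (S1 ∪ S2 ∪ S3) S4 := by
      rw [Finset.disjoint_left]
      intro x hx hx'
      simp only [hS1, hS2, hS3, hS4, Finset.mem_union, Finset.mem_image,
        Finset.mem_range] at hx hx'
      obtain ⟨b, hb, hxb⟩ := hx'
      rcases hx with (⟨a, ha, hxa⟩ | ⟨a, ha, hxa⟩) | ⟨a, ha, hxa⟩ <;> omega
    have d2 : Disjoint (S1 ∪ S2) S3 := by
      rw [Finset.disjoint_left]
      intro x hx hx'
      simp only [hS1, hS2, hS3, Finset.mem_union, Finset.mem_image,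
        Finset.mem_range] at hx hx'
      obtain ⟨b, hb, hxb⟩ := hx'
      rcases hx with ⟨a, ha, hxa⟩ | ⟨a, ha, hxa⟩ <;> omega
    have d3 : Disjoint S1 S2 := by
      rw [Finset.disjoint_left]
      intro x hx hx'
      simp only [hS1, hS2, Finset.mem_image, Finset.mem_range] at hx hx'
      obtain ⟨b, hb, hxb⟩ := hx'
      obtain ⟨a, ha, hxa⟩ := hx
      omega
    rw [Finset.card_union_of_disjoint d1, Finset.card_union_of_disjoint d2,
      Finset.card_union_of_disjoint d3, hS1, hS2, hS3, hS4,
      Finset.card_image_of_injOn inj1, Finset.card_image_of_injOn inj2,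
      Finset.card_image_of_injOn inj3, Finset.card_image_of_injOn inj4,
      Finset.card_range, Finset.card_range, Finset.card_range, Finset.card_range]
    omega
  · -- coverage
    intro v
    rw [hcov v]
    have hv : (v:ℕ) < n := v.isLt
    constructor
    · rintro ⟨i, hiS, hcase⟩ hcon
      rw [hmem] at hiS
      have hvals : (v:ℕ) = (r:ℕ) ∨ (v:ℕ) = (s:ℕ) ∨ (v:ℕ) = (t:ℕ) := by
        rcases hcon with rfl | rfl | rfl
        exacts [Or.inl rfl, Or.inr (Or.inl rfl), Or.inr (Or.inr rfl)]
      rcases hiS with ⟨a, ha, rfl⟩ | ⟨a, ha, rfl⟩ | ⟨a, ha, rfl⟩ | ⟨a, ha, rfl⟩ <;> omega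
    · intro hcon
      have hvr : (v:ℕ) ≠ (r:ℕ) := fun h => hcon (Or.inl (Fin.ext h))
      have hvs : (v:ℕ) ≠ (s:ℕ) := fun h => hcon (Or.inr (Or.inl (Fin.ext h)))
      have hvt : (v:ℕ) ≠ (t:ℕ) := fun h => hcon (Or.inr (Or.inr (Fin.ext h)))
      by_cases c1 : (v:ℕ) < (r:ℕ)
      · -- wrap region, low part
        by_cases c2 : (v:ℕ) < v0
        · -- v = 0, v0 = 1 : covered by the wrap edge with i = n-1 ∈ S3
          refine ⟨n-1, (hmem _).mpr (Or.inr (Or.inr (Or.inl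
            ⟨(n - 2 - (t:ℕ))/2, by omega, by omega⟩))), Or.inr (Or.inr ⟨rfl, by omega⟩)⟩
        · by_cases c3 : ((v:ℕ) - v0) % 2 = 0
          · exact ⟨(v:ℕ), (hmem _).mpr (Or.inr (Or.inr (Or.inr
              ⟨((v:ℕ) - v0)/2, by omega, by omega⟩))), Or.inl rfl⟩
          · exact ⟨(v:ℕ) - 1, (hmem _).mpr (Or.inr (Or.inr (Or.inr
              ⟨((v:ℕ) - v0 - 1)/2, by omega, by omega⟩))), Or.inr (Or.inl (by omega))⟩
      · by_cases c2 : (v:ℕ) < (s:ℕ)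
        · -- region (r, s)
          by_cases c3 : ((v:ℕ) - (r:ℕ)) % 2 = 1
          · exact ⟨(v:ℕ), (hmem _).mpr (Or.inl
              ⟨((v:ℕ) - (r:ℕ) - 1)/2, by omega, by omega⟩), Or.inl rfl⟩
          · exact ⟨(v:ℕ) - 1, (hmem _).mpr (Or.inl
              ⟨((v:ℕ) - (r:ℕ) - 2)/2, by omega, by omega⟩), Or.inr (Or.inl (by omega))⟩
        · by_cases c4 : (v:ℕ) < (t:ℕ)
          · -- region (s, t)
            by_cases c3 : ((v:ℕ) - (s:ℕ)) % 2 = 1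
            · exact ⟨(v:ℕ), (hmem _).mpr (Or.inr (Or.inl
                ⟨((v:ℕ) - (s:ℕ) - 1)/2, by omega, by omega⟩)), Or.inl rfl⟩
            · exact ⟨(v:ℕ) - 1, (hmem _).mpr (Or.inr (Or.inl
                ⟨((v:ℕ) - (s:ℕ) - 2)/2, by omega, by omega⟩)), Or.inr (Or.inl (by omega))⟩
          · -- region (t, n)
            by_cases c3 : ((v:ℕ) - (t:ℕ)) % 2 = 1
            · exact ⟨(v:ℕ), (hmem _).mpr (Or.inr (Or.inr (Or.inl
                ⟨((v:ℕ) - (t:ℕ) - 1)/2, by omega, by omega⟩))), Or.inl rfl⟩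
            · exact ⟨(v:ℕ) - 1, (hmem _).mpr (Or.inr (Or.inr (Or.inl
                ⟨((v:ℕ) - (t:ℕ) - 2)/2, by omega, by omega⟩))), Or.inr (Or.inl (by omega))⟩

end Stmt17Aux

open Stmt17Aux

/-- **Lemma.** For the odd cycle `C_n` (`n > 3`), the minimal generators of the
squarefree power `I^{[(n-1)/2-1]}` are exactly the monomials
`(x_0 ⋯ x_{n-1})/(x_r x_s x_t)` with `r < s < t` and `s - r`, `t - s` odd. -/
theorem stmt17 (K : Type) [Field K] (n : ℕ) (hn : 3 < n) (hodd : Odd n) :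
    ∀ e : Fin n →₀ ℕ,
      e ∈ minGen (sqfreePower K (cycleG n) ((n - 1) / 2 - 1)) ↔
        ∃ r s t : Fin n, r < s ∧ s < t ∧
          Odd ((s : ℕ) - (r : ℕ)) ∧ Odd ((t : ℕ) - (s : ℕ)) ∧
          ∀ x : Fin n, e x = if x = r ∨ x = s ∨ x = t then 0 else 1 := by
  classical
  have hn2 : n % 2 = 1 := Nat.odd_iff.mp hodd
  intro e
  constructor
  · rintro ⟨h1, h2⟩
    obtain ⟨M, hM, hcard, hle⟩ := mem_sqfree.mp h1
    have heq : expo M = e := by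
      by_contra hne
      exact h2 (expo M) hle hne (gen_mem hM hcard)
    have hcc : (covered M).card = n - 3 := by
      rw [card_covered hM, hcard]; omega
    have hTc : ((covered M)ᶜ).card = 3 := by
      rw [Finset.card_compl, hcc, Fintype.card_fin]; omega
    obtain ⟨r, s, t, hrs, hst, hTe⟩ := exists_sorted_triple hTc
    have hmemT : ∀ x : Fin n, x ∈ covered M ↔ ¬(x = r ∨ x = s ∨ x = t) := by
      intro x
      rw [← Finset.notMem_compl, hTe]
      simp only [Finset.mem_insert, Finset.mem_singleton]
    have hrs' : (r:ℕ) < (s:ℕ) := hrs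
    have hst' : (s:ℕ) < (t:ℕ) := hst
    have hrc : r ∉ covered M := fun h => (hmemT r).mp h (Or.inl rfl)
    have hsc : s ∉ covered M := fun h => (hmemT s).mp h (Or.inr (Or.inl rfl))
    have htc : t ∉ covered M := fun h => (hmemT t).mp h (Or.inr (Or.inr rfl))
    have ev1 : Even ((s:ℕ) - (r:ℕ) - 1) := by
      refine arc_even hM hrs hrc hsc ?_
      intro v hv1 hv2
      refine (hmemT v).mpr ?_
      rintro (rfl | rfl | rfl)
      · exact absurd hv1 (lt_irrefl v)
      · exact absurd hv2 (lt_irrefl v)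
      · exact absurd (hv2.trans hst) (lt_irrefl v)
    have ev2 : Even ((t:ℕ) - (s:ℕ) - 1) := by
      refine arc_even hM hst hsc htc ?_
      intro v hv1 hv2
      refine (hmemT v).mpr ?_
      rintro (rfl | rfl | rfl)
      · exact absurd (hrs.trans hv1) (lt_irrefl v)
      · exact absurd hv1 (lt_irrefl v)
      · exact absurd hv2 (lt_irrefl v)
    rw [Nat.even_iff] at ev1 ev2
    refine ⟨r, s, t, hrs, hst, Nat.odd_iff.mpr (by omega), Nat.odd_iff.mpr (by omega), ?_⟩
    intro x
    rw [← heq, expo_apply hM x]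
    by_cases hx : x = r ∨ x = s ∨ x = t
    · rw [if_pos hx, if_neg (fun hc => (hmemT x).mp hc hx)]
    · rw [if_neg hx, if_pos ((hmemT x).mpr hx)]
  · rintro ⟨r, s, t, hrs, hst, h1, h2, he⟩
    obtain ⟨M, hM, hcard, hcov⟩ := construct hn hodd r s t hrs hst h1 h2
    have heq : e = expo M := by
      ext x
      rw [he x, expo_apply hM x]
      by_cases hx : x = r ∨ x = s ∨ x = t
      · rw [if_pos hx, if_neg (fun hc => ((hcov x).mp hc) hx)]
      · rw [if_neg hx, if_pos ((hcov x).mpr hx)]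
    refine ⟨by rw [heq]; exact gen_mem hM hcard, ?_⟩
    intro e' hle hne hmem'
    obtain ⟨M', hM', hcard', hle'⟩ := mem_sqfree.mp hmem'
    have hlt := mdeg_strict hle hne
    have hq := mdeg_mono hle'
    rw [mdeg_expo hM', hcard'] at hq
    rw [heq, mdeg_expo hM, hcard] at hlt
    omega

end
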